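/- There exist absolute constants c > 0 and c' > 0 such that for every integer m ≥ 1 and every strictly decreasing sequence 2π > θ₁ > θ₂ > … > θ_m > 0, setting s_ℓ = θ₁ + θ₂ + … + θ_ℓ, one has |Σ_{j=1}^{m} e^{i s_j}| ≤ c·(θ_m^{−1} + (2π − θ₁)^{−1}) ≤ c'·(|e^{i θ_m/2} − 1|^{−1} + |e^{i θ₁/2} + 1|^{−1}). -/

import Mathlib

open Finset


private lemma exp_I_sub_one' (t : ℝ) :
    Complex.exp (Complex.I * (t : ℂ)) - 1
      = Complex.exp (Complex.I * ((t/2 : ℝ) : ℂ)) * (2 * Complex.I * ((Real.sin (t/2) : ℝ) : ℂ)) := by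
  have h1 : Complex.I * (t:ℂ) = Complex.I * ((t/2:ℝ):ℂ) + ((t/2:ℝ):ℂ) * Complex.I := by
    push_cast; ring
  rw [Complex.ofReal_sin, Complex.sin, h1, Complex.exp_add,
    show (-((t/2:ℝ):ℂ) * Complex.I) = -(((t/2:ℝ):ℂ) * Complex.I) by ring, Complex.exp_neg]
  set e := Complex.exp (((t/2:ℝ):ℂ) * Complex.I) with he
  have h2 : Complex.exp (Complex.I * ((t/2:ℝ):ℂ)) = e := by rw [he, mul_comm]
  rw [h2]
  have h3 : e * e⁻¹ = 1 := mul_inv_cancel₀ (Complex.exp_ne_zero _)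
  linear_combination (e*e - 1) * Complex.I_sq - Complex.I^2 * h3

private lemma exp_I_add_one' (t : ℝ) :
    Complex.exp (Complex.I * (t : ℂ)) + 1
      = Complex.exp (Complex.I * ((t/2 : ℝ) : ℂ)) * (2 * ((Real.cos (t/2) : ℝ) : ℂ)) := by
  have h1 : Complex.I * (t:ℂ) = Complex.I * ((t/2:ℝ):ℂ) + ((t/2:ℝ):ℂ) * Complex.I := by
    push_cast; ring
  rw [Complex.ofReal_cos, Complex.cos, h1, Complex.exp_add,
    show (-((t/2:ℝ):ℂ) * Complex.I) = -(((t/2:ℝ):ℂ) * Complex.I) by ring, Complex.exp_neg]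
  set e := Complex.exp (((t/2:ℝ):ℂ) * Complex.I) with he
  have h2 : Complex.exp (Complex.I * ((t/2:ℝ):ℂ)) = e := by rw [he, mul_comm]
  rw [h2]
  have h3 : e * e⁻¹ = 1 := mul_inv_cancel₀ (Complex.exp_ne_zero _)
  linear_combination -h3

private lemma abs_exp_I' (t : ℝ) : ‖Complex.exp (Complex.I * (t : ℂ))‖ = 1 := by
  rw [Complex.norm_exp]; simp

private lemma abs_exp_I_sub_one' (t : ℝ) :
    ‖Complex.exp (Complex.I * (t : ℂ)) - 1‖ = 2 * |Real.sin (t/2)| := by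
  rw [exp_I_sub_one', norm_mul, abs_exp_I', one_mul, norm_mul, norm_mul,
    Complex.norm_two, Complex.norm_I, Complex.norm_real, Real.norm_eq_abs, mul_one]

private lemma abs_exp_I_add_one' (t : ℝ) :
    ‖Complex.exp (Complex.I * (t : ℂ)) + 1‖ = 2 * |Real.cos (t/2)| := by
  rw [exp_I_add_one', norm_mul, abs_exp_I', one_mul, norm_mul,
    Complex.norm_two, Complex.norm_real, Real.norm_eq_abs]

private lemma exp_mul_conj' (x : ℝ) :
    Complex.exp (Complex.I * (x:ℂ)) * (((Real.cos x : ℝ):ℂ) - Complex.I * ((Real.sin x : ℝ):ℂ)) = 1 := by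
  rw [Complex.ofReal_cos, Complex.ofReal_sin, mul_comm Complex.I ((x:ℂ)), Complex.exp_mul_I]
  have h := Complex.cos_sq_add_sin_sq (x:ℂ)
  linear_combination h - Complex.sin (x:ℂ)^2 * Complex.I_sq

private lemma w_eq' (t : ℝ) (hs : Real.sin (t/2) ≠ 0) :
    (Complex.exp (Complex.I * (t:ℂ)) - 1)⁻¹
      = -(1/2 : ℂ) - (Complex.I/2) * ((Real.cos (t/2) / Real.sin (t/2) : ℝ) : ℂ) := by
  rw [exp_I_sub_one']
  apply inv_eq_of_mul_eq_one_right
  have h := exp_mul_conj' (t/2)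
  have hsc : ((Real.sin (t/2):ℝ):ℂ) ≠ 0 := Complex.ofReal_ne_zero.mpr hs
  rw [Complex.ofReal_div (Real.cos (t/2)) (Real.sin (t/2))]
  set e := Complex.exp (Complex.I * ((t/2:ℝ):ℂ))
  set s := ((Real.sin (t/2):ℝ):ℂ)
  set c := ((Real.cos (t/2):ℝ):ℂ)
  have hss : s * s⁻¹ = 1 := mul_inv_cancel₀ hsc
  linear_combination h - e*Complex.I^2*c*hss - e*c*Complex.I_sq

private lemma telescope' {M : Type*} [AddCommGroup M] (f : ℕ → M) (n : ℕ) :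
    ∑ j ∈ Finset.Icc 1 n, (f (j+1) - f j) = f (n+1) - f 1 := by
  induction n with
  | zero => simp
  | succ n ih => rw [Finset.sum_Icc_succ_top (by omega), ih]; abel

private lemma cot_mono' {x y : ℝ} (hx : 0 < x) (hxy : x < y) (hy : y < Real.pi) :
    Real.cos y / Real.sin y ≤ Real.cos x / Real.sin x := by
  have sx : 0 < Real.sin x := Real.sin_pos_of_pos_of_lt_pi hx (hxy.trans hy)
  have sy : 0 < Real.sin y := Real.sin_pos_of_pos_of_lt_pi (hx.trans hxy) hy
  have key : 0 ≤ Real.sin (y - x) :=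
    Real.sin_nonneg_of_nonneg_of_le_pi (by linarith) (by linarith)
  rw [Real.sin_sub] at key
  rw [div_le_div_iff₀ sy sx]
  nlinarith

private lemma abs_cot_le' {x : ℝ} (hx : 0 < x) (hx2 : x < Real.pi) :
    |Real.cos x / Real.sin x| ≤ (Real.sin x)⁻¹ := by
  have sx : 0 < Real.sin x := Real.sin_pos_of_pos_of_lt_pi hx hx2
  rw [abs_div, abs_of_pos sx, div_le_iff₀ sx, inv_mul_cancel₀ (ne_of_gt sx)]
  exact Real.abs_cos_le_one x

private lemma inv_sin_le' {t : ℝ} (h0 : 0 < t) (h2 : t < 2 * Real.pi) :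
    (Real.sin (t/2))⁻¹ ≤ Real.pi * (t⁻¹ + (2 * Real.pi - t)⁻¹) := by
  have hπ := Real.pi_pos
  have hinv1 : 0 < t⁻¹ := by positivity
  have hinv2 : (0:ℝ) < (2 * Real.pi - t)⁻¹ := by
    apply inv_pos.mpr; linarith
  rcases le_or_gt t Real.pi with h | h
  · have hb : t / Real.pi ≤ Real.sin (t/2) := by
      have := Real.mul_le_sin (x := t/2) (by linarith) (by linarith)
      calc t / Real.pi = 2 / Real.pi * (t/2) := by ring
        _ ≤ Real.sin (t/2) := this
    have hbp : 0 < t / Real.pi := by positivity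
    have h1 : (Real.sin (t/2))⁻¹ ≤ (t / Real.pi)⁻¹ := by
      apply inv_anti₀ hbp hb
    have h2' : (t / Real.pi)⁻¹ = Real.pi * t⁻¹ := by
      field_simp
    nlinarith
  · have hs : Real.sin (t/2) = Real.sin (Real.pi - t/2) := (Real.sin_pi_sub _).symm
    have hb : (2 * Real.pi - t) / Real.pi ≤ Real.sin (t/2) := by
      rw [hs]
      have := Real.mul_le_sin (x := Real.pi - t/2) (by linarith) (by linarith)
      calc (2 * Real.pi - t) / Real.pi = 2 / Real.pi * (Real.pi - t/2) := by ring
        _ ≤ Real.sin (Real.pi - t/2) := this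
    have hbp : 0 < (2 * Real.pi - t) / Real.pi := by
      apply div_pos (by linarith) hπ
    have h1 : (Real.sin (t/2))⁻¹ ≤ ((2 * Real.pi - t) / Real.pi)⁻¹ :=
      inv_anti₀ hbp hb
    have h2' : ((2 * Real.pi - t) / Real.pi)⁻¹ = Real.pi * (2 * Real.pi - t)⁻¹ := by
      rw [inv_div, div_eq_mul_inv]
    nlinarith

private lemma main_bound' (n : ℕ) (θ : ℕ → ℝ)
    (hθ1 : θ 1 < 2 * Real.pi) (hθm : 0 < θ (n+1))
    (hdec : ∀ j, 1 ≤ j → j < n+1 → θ (j + 1) < θ j) :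
    ‖∑ j ∈ Finset.Icc 1 (n+1),
        Complex.exp (Complex.I * ((∑ i ∈ Finset.Icc 1 j, θ i : ℝ) : ℂ))‖
      ≤ 1 + (Real.sin (θ (n+1) / 2))⁻¹ + (Real.sin (θ 1 / 2))⁻¹ := by
  have hπ := Real.pi_pos
  set m := n + 1 with hmdef
  -- monotonicity
  have mono : ∀ k j, 1 ≤ j → j ≤ k → k ≤ m → θ k ≤ θ j := by
    intro k
    induction k with
    | zero => intro j hj hjk _; omega
    | succ l ih =>
      intro j hj hjk hkm
      rcases eq_or_lt_of_le hjk with rfl | hlt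
      · exact le_refl _
      · have hjl : j ≤ l := by omega
        have h1l : 1 ≤ l := le_trans hj hjl
        have : θ (l+1) < θ l := hdec l h1l (by omega)
        exact le_trans this.le (ih j hj hjl (by omega))
  have hpos : ∀ j, 1 ≤ j → j ≤ m → 0 < θ j := fun j h1 h2 =>
    lt_of_lt_of_le hθm (mono m j h1 h2 le_rfl)
  have hlt2π : ∀ j, 1 ≤ j → j ≤ m → θ j < 2 * Real.pi := fun j h1 h2 =>
    lt_of_le_of_lt (mono j 1 le_rfl h1 h2) hθ1
  have hsin : ∀ j, 1 ≤ j → j ≤ m → 0 < Real.sin (θ j / 2) := by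
    intro j h1 h2
    exact Real.sin_pos_of_pos_of_lt_pi (by linarith [hpos j h1 h2])
      (by linarith [hlt2π j h1 h2])
  set s : ℕ → ℝ := fun j => ∑ i ∈ Finset.Icc 1 j, θ i with hs
  set a : ℕ → ℂ := fun j => Complex.exp (Complex.I * ((s j : ℝ):ℂ)) with ha
  set W : ℕ → ℂ := fun j => (Complex.exp (Complex.I * ((θ j : ℝ):ℂ)) - 1)⁻¹ with hW
  have hne : ∀ j, 1 ≤ j → j ≤ m → Complex.exp (Complex.I * ((θ j:ℝ):ℂ)) - 1 ≠ 0 := by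
    intro j h1 h2
    rw [exp_I_sub_one']
    exact mul_ne_zero (Complex.exp_ne_zero _)
      (mul_ne_zero (mul_ne_zero two_ne_zero Complex.I_ne_zero)
        (Complex.ofReal_ne_zero.mpr (ne_of_gt (hsin j h1 h2))))
  have harec : ∀ j, a (j+1) = a j * Complex.exp (Complex.I * ((θ (j+1):ℝ):ℂ)) := by
    intro j
    rw [ha]
    simp only
    rw [← Complex.exp_add]
    congr 1
    rw [hs]
    simp only
    rw [Finset.sum_Icc_succ_top (by omega : 1 ≤ j + 1)]
    push_cast
    ring
  have hstep : ∀ j, 1 ≤ j → j < m →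
      a j = (a (j+1) * W (j+1) - a j * W j) + a j * (W j - W (j+1)) := by
    intro j hj hjm
    have hz := hne (j+1) (by omega) (by omega)
    have : a (j+1) * W (j+1) =
        a j * Complex.exp (Complex.I * ((θ (j+1):ℝ):ℂ)) * W (j+1) := by rw [harec]
    have hWj1 : (Complex.exp (Complex.I * ((θ (j+1):ℝ):ℂ)) - 1) * W (j+1) = 1 := by
      rw [hW]; exact mul_inv_cancel₀ hz
    calc a j = a j * ((Complex.exp (Complex.I * ((θ (j+1):ℝ):ℂ)) - 1) * W (j+1)) := by
              rw [hWj1, mul_one]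
      _ = a j * Complex.exp (Complex.I * ((θ (j+1):ℝ):ℂ)) * W (j+1) - a j * W (j+1) := by ring
      _ = a (j+1) * W (j+1) - a j * W (j+1) := by rw [harec]
      _ = (a (j+1) * W (j+1) - a j * W j) + a j * (W j - W (j+1)) := by ring
  -- the identity
  have hidentity : ∑ j ∈ Finset.Icc 1 m, a j
      = a m + ((a m * W m - a 1 * W 1) + ∑ j ∈ Finset.Icc 1 n, a j * (W j - W (j+1))) := by
    rw [hmdef, Finset.sum_Icc_succ_top (by omega : 1 ≤ n + 1)]
    have h1 : ∑ j ∈ Finset.Icc 1 n, a j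
        = ∑ j ∈ Finset.Icc 1 n, ((a (j+1) * W (j+1) - a j * W j) + a j * (W j - W (j+1))) := by
      apply Finset.sum_congr rfl
      intro j hj
      rw [Finset.mem_Icc] at hj
      exact hstep j hj.1 (by omega)
    rw [h1, Finset.sum_add_distrib, telescope' (fun j => a j * W j) n]
    ring
  -- abs computations
  have haabs : ∀ j, ‖a j‖ = 1 := fun j => abs_exp_I' (s j)
  have hWabs : ∀ j, 1 ≤ j → j ≤ m → ‖W j‖ = (2 * Real.sin (θ j / 2))⁻¹ := by
    intro j h1 h2
    rw [hW]
    simp only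
    rw [norm_inv, abs_exp_I_sub_one', abs_of_pos (hsin j h1 h2)]
  have hdiffabs : ∀ j, 1 ≤ j → j ≤ n →
      ‖a j * (W j - W (j+1))‖
        = (Real.cos (θ (j+1) / 2) / Real.sin (θ (j+1) / 2)) / 2
          - (Real.cos (θ j / 2) / Real.sin (θ j / 2)) / 2 := by
    intro j h1 h2
    have hj1 : (1:ℕ) ≤ j + 1 := by omega
    have hjm : j ≤ m := by omega
    have hj1m : j + 1 ≤ m := by omega
    have hmono : Real.cos (θ j / 2) / Real.sin (θ j / 2)
        ≤ Real.cos (θ (j+1) / 2) / Real.sin (θ (j+1) / 2) := by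
      apply cot_mono' (by linarith [hpos (j+1) hj1 hj1m])
        (by linarith [hdec j h1 (by omega)]) (by linarith [hlt2π j h1 hjm])
    rw [norm_mul, haabs, one_mul, hW]
    simp only
    rw [w_eq' (θ j) (ne_of_gt (hsin j h1 hjm)), w_eq' (θ (j+1)) (ne_of_gt (hsin (j+1) hj1 hj1m))]
    have hrw : (-(1/2 : ℂ) - (Complex.I/2) * ((Real.cos (θ j / 2) / Real.sin (θ j / 2) : ℝ) : ℂ))
        - (-(1/2 : ℂ) - (Complex.I/2) * ((Real.cos (θ (j+1) / 2) / Real.sin (θ (j+1) / 2) : ℝ) : ℂ))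
        = (Complex.I/2) * (((Real.cos (θ (j+1) / 2) / Real.sin (θ (j+1) / 2)
            - Real.cos (θ j / 2) / Real.sin (θ j / 2) : ℝ)) : ℂ) := by
      push_cast
      ring
    rw [hrw, norm_mul, norm_div, Complex.norm_I, Complex.norm_two, Complex.norm_real, Real.norm_eq_abs,
      abs_of_nonneg (by linarith)]
    ring
  -- put it together
  rw [show (∑ j ∈ Finset.Icc 1 m,
      Complex.exp (Complex.I * ((∑ i ∈ Finset.Icc 1 j, θ i : ℝ) : ℂ))) = ∑ j ∈ Finset.Icc 1 m, a j
      from rfl]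
  rw [hidentity]
  have tele2 : ∑ j ∈ Finset.Icc 1 n, ‖a j * (W j - W (j+1))‖
      = (Real.cos (θ m / 2) / Real.sin (θ m / 2)) / 2
        - (Real.cos (θ 1 / 2) / Real.sin (θ 1 / 2)) / 2 := by
    have : ∑ j ∈ Finset.Icc 1 n, ‖a j * (W j - W (j+1))‖
        = ∑ j ∈ Finset.Icc 1 n, ((fun k => (Real.cos (θ k / 2) / Real.sin (θ k / 2)) / 2) (j+1)
            - (fun k => (Real.cos (θ k / 2) / Real.sin (θ k / 2)) / 2) j) := by
      apply Finset.sum_congr rfl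
      intro j hj
      rw [Finset.mem_Icc] at hj
      exact hdiffabs j hj.1 hj.2
    rw [this]
    exact telescope' (fun k => (Real.cos (θ k / 2) / Real.sin (θ k / 2)) / 2) n
  have habs1 : ‖a m + ((a m * W m - a 1 * W 1) + ∑ j ∈ Finset.Icc 1 n, a j * (W j - W (j+1)))‖
      ≤ 1 + (‖W m‖ + ‖W 1‖
          + ∑ j ∈ Finset.Icc 1 n, ‖a j * (W j - W (j+1))‖) := by
    refine le_trans (norm_add_le _ _) ?_
    rw [haabs]
    gcongr
    refine le_trans (norm_add_le _ _) ?_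
    gcongr
    · refine le_trans (norm_sub_le _ _) ?_
      rw [norm_mul, norm_mul, haabs, haabs, one_mul, one_mul]
    · exact norm_sum_le _ _
  refine le_trans habs1 ?_
  rw [tele2, hWabs m (by omega) le_rfl, hWabs 1 (by omega) (by omega)]
  have c1 := abs_cot_le' (x := θ m / 2) (by linarith [hpos m (by omega) le_rfl])
    (by linarith [hlt2π m (by omega) le_rfl])
  have c2 := abs_cot_le' (x := θ 1 / 2) (by linarith [hpos 1 (by omega) (by omega)])
    (by linarith [hlt2π 1 (by omega) (by omega)])
  have s1 := hsin m (by omega) le_rfl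
  have s2 := hsin 1 (by omega) (by omega)
  have e1 : (2 * Real.sin (θ m / 2))⁻¹ = (Real.sin (θ m / 2))⁻¹ / 2 := by
    rw [mul_inv]; ring
  have e2 : (2 * Real.sin (θ 1 / 2))⁻¹ = (Real.sin (θ 1 / 2))⁻¹ / 2 := by
    rw [mul_inv]; ring
  rw [e1, e2]
  have b1 : Real.cos (θ m / 2) / Real.sin (θ m / 2) ≤ (Real.sin (θ m / 2))⁻¹ :=
    le_trans (le_abs_self _) c1
  have b2 : -(Real.cos (θ 1 / 2) / Real.sin (θ 1 / 2)) ≤ (Real.sin (θ 1 / 2))⁻¹ :=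
    le_trans (neg_le_abs _) c2
  linarith

private lemma theta_last_le' (n : ℕ) (θ : ℕ → ℝ)
    (hdec : ∀ j, 1 ≤ j → j < n+1 → θ (j + 1) < θ j) : θ (n+1) ≤ θ 1 := by
  induction n with
  | zero => exact le_refl _
  | succ l ih =>
    have h1 : θ (l+1+1) < θ (l+1) := hdec (l+1) (by omega) (by omega)
    have h2 : θ (l+1) ≤ θ 1 := ih (fun j hj hjl => hdec j hj (by omega))
    linarith

/-- There are absolute constants `c, c' > 0` such that for every `m ≥ 1` and
every strictly decreasing sequence `2π > θ₁ > … > θ_m > 0`, with `s_ℓ = θ₁ + … + θ_ℓ`,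
`|Σ_{j=1}^m e^{i s_j}| ≤ c (θ_m⁻¹ + (2π - θ₁)⁻¹)
  ≤ c' (|e^{i θ_m/2} - 1|⁻¹ + |e^{i θ₁/2} + 1|⁻¹)`. -/
theorem van_der_corput_type_bound :
    ∃ c > (0 : ℝ), ∃ c' > (0 : ℝ), ∀ m : ℕ, 1 ≤ m → ∀ θ : ℕ → ℝ,
      θ 1 < 2 * Real.pi → 0 < θ m →
      (∀ j, 1 ≤ j → j < m → θ (j + 1) < θ j) →
      ‖∑ j ∈ Finset.Icc 1 m,
          Complex.exp (Complex.I * ((∑ i ∈ Finset.Icc 1 j, θ i : ℝ) : ℂ))‖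
        ≤ c * ((θ m)⁻¹ + (2 * Real.pi - θ 1)⁻¹) ∧
      c * ((θ m)⁻¹ + (2 * Real.pi - θ 1)⁻¹)
        ≤ c' * (‖Complex.exp (Complex.I * ((θ m / 2 : ℝ) : ℂ)) - 1‖⁻¹
              + ‖Complex.exp (Complex.I * ((θ 1 / 2 : ℝ) : ℂ)) + 1‖⁻¹) := by
  have hπ := Real.pi_pos
  refine ⟨4 * Real.pi, by linarith, 2 * Real.pi, by linarith, ?_⟩
  intro m hm θ hθ1 hθm hdec
  obtain ⟨n, rfl⟩ : ∃ n, m = n + 1 := ⟨m - 1, by omega⟩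
  have hle : θ (n+1) ≤ θ 1 := theta_last_le' n θ hdec
  have hθ1pos : 0 < θ 1 := lt_of_lt_of_le hθm hle
  have hθmlt : θ (n+1) < 2 * Real.pi := lt_of_le_of_lt hle hθ1
  have him : (0:ℝ) < (θ (n+1))⁻¹ := by positivity
  have hi1 : (0:ℝ) < (2 * Real.pi - θ 1)⁻¹ := by
    apply inv_pos.mpr; linarith
  constructor
  · refine le_trans (main_bound' n θ hθ1 hθm hdec) ?_
    have bism := inv_sin_le' hθm hθmlt
    have bis1 := inv_sin_le' hθ1pos hθ1
    have hmono1 : (2 * Real.pi - θ (n+1))⁻¹ ≤ (2 * Real.pi - θ 1)⁻¹ :=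
      inv_anti₀ (by linarith) (by linarith)
    have hmono2 : (θ 1)⁻¹ ≤ (θ (n+1))⁻¹ := inv_anti₀ hθm hle
    have hone : 1 ≤ 2 * Real.pi * (θ (n+1))⁻¹ := by
      have h := mul_inv_cancel₀ (ne_of_gt hθm)
      nlinarith
    have t1 : (Real.sin (θ (n+1) / 2))⁻¹ ≤ Real.pi * ((θ (n+1))⁻¹ + (2 * Real.pi - θ 1)⁻¹) := by
      refine le_trans bism ?_
      apply mul_le_mul_of_nonneg_left (by linarith) hπ.le
    have t2 : (Real.sin (θ 1 / 2))⁻¹ ≤ Real.pi * ((θ (n+1))⁻¹ + (2 * Real.pi - θ 1)⁻¹) := by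
      refine le_trans bis1 ?_
      apply mul_le_mul_of_nonneg_left (by linarith) hπ.le
    have hnn : (0:ℝ) ≤ 2 * Real.pi * (2 * Real.pi - θ 1)⁻¹ := by positivity
    nlinarith
  · -- second inequality
    rw [abs_exp_I_sub_one' (θ (n+1) / 2), abs_exp_I_add_one' (θ 1 / 2)]
    have hx : 0 < θ (n+1) / 2 / 2 := by linarith
    have hx2 : θ (n+1) / 2 / 2 < Real.pi / 2 := by linarith
    have hsx : 0 < Real.sin (θ (n+1) / 2 / 2) :=
      Real.sin_pos_of_pos_of_lt_pi hx (by linarith)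
    have hsinle : Real.sin (θ (n+1) / 2 / 2) ≤ θ (n+1) / 2 / 2 := (Real.sin_lt hx).le
    have hy : 0 < Real.pi / 2 - θ 1 / 2 / 2 := by linarith
    have hcos : Real.cos (θ 1 / 2 / 2) = Real.sin (Real.pi / 2 - θ 1 / 2 / 2) :=
      (Real.sin_pi_div_two_sub _).symm
    have hcx : 0 < Real.cos (θ 1 / 2 / 2) := by
      rw [hcos]
      exact Real.sin_pos_of_pos_of_lt_pi hy (by linarith)
    have hcosle : Real.cos (θ 1 / 2 / 2) ≤ Real.pi / 2 - θ 1 / 2 / 2 := by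
      rw [hcos]; exact (Real.sin_lt hy).le
    rw [abs_of_pos hsx, abs_of_pos hcx]
    have hA : (θ (n+1) / 2)⁻¹ ≤ (2 * Real.sin (θ (n+1) / 2 / 2))⁻¹ := by
      apply inv_anti₀ (by positivity) (by linarith)
    have hB : ((2 * Real.pi - θ 1) / 2)⁻¹ ≤ (2 * Real.cos (θ 1 / 2 / 2))⁻¹ := by
      apply inv_anti₀ (by positivity) (by linarith)
    have hB' : ((2 * Real.pi - θ 1) / 2)⁻¹ = 2 * (2 * Real.pi - θ 1)⁻¹ := by
      rw [div_eq_mul_inv, mul_inv, inv_inv]; ring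
    have hA' : (θ (n+1) / 2)⁻¹ = 2 * (θ (n+1))⁻¹ := by
      rw [div_eq_mul_inv, mul_inv, inv_inv]; ring
    have hsum : 2 * (θ (n+1))⁻¹ + 2 * (2 * Real.pi - θ 1)⁻¹
        ≤ (2 * Real.sin (θ (n+1) / 2 / 2))⁻¹ + (2 * Real.cos (θ 1 / 2 / 2))⁻¹ := by
      rw [← hA', ← hB']
      linarith
    nlinarith [mul_le_mul_of_nonneg_left hsum (by linarith : (0:ℝ) ≤ 2 * Real.pi)]
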